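/- (Rank Compression) Let ℳ be a finite set of real a×b matrices and let a', b' ∈ ℕ. Then there exists a linear map Π : ℝ^{a×b} → ℝ^{a'×b'} such that for every M ∈ ℳ, rank(Π(M)) = min(rank(M), a', b'). -/

import Mathlib

open Matrix

namespace Stmt6Aux

variable {a b : ℕ} (a' b' : ℕ)

/-- bound: `min M.rank (min a' b') ≤ a'` -/
theorem hra (M : Matrix (Fin a) (Fin b) ℝ) : min M.rank (min a' b') ≤ a' :=
  le_trans (min_le_right _ _) (min_le_left _ _)

theorem hrb (M : Matrix (Fin a) (Fin b) ℝ) : min M.rank (min a' b') ≤ b' :=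
  le_trans (min_le_right _ _) (min_le_right _ _)

theorem hrM (M : Matrix (Fin a) (Fin b) ℝ) : min M.rank (min a' b') ≤ M.rank :=
  min_le_left _ _

/-- For `r ≤ a', b', rank M` there are matrices `A`, `B` such that the top-left
`r × r` block of `A * M * B` is the identity. -/
theorem exists_AB {r : ℕ} (M : Matrix (Fin a) (Fin b) ℝ)
    (h1 : r ≤ a') (h2 : r ≤ b') (h3 : r ≤ M.rank) :
    ∃ (A : Matrix (Fin a') (Fin a) ℝ) (B : Matrix (Fin b) (Fin b') ℝ),
      ((A * M * B).submatrix (Fin.castLE h1) (Fin.castLE h2)) = (1 : Matrix (Fin r) (Fin r) ℝ) := by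
  classical
  set f := M.mulVecLin with hf
  have hrank : r ≤ Module.finrank ℝ (LinearMap.range f) := h3
  let c : Module.Basis (Fin (Module.finrank ℝ (LinearMap.range f))) ℝ (LinearMap.range f) :=
    Module.finBasis ℝ _
  let w : Fin r → (Fin a → ℝ) := fun i => (c (Fin.castLE hrank i) : Fin a → ℝ)
  have hw : LinearIndependent ℝ w := by
    have h₁ : LinearIndependent ℝ (fun i : Fin r => c (Fin.castLE hrank i)) :=
      c.linearIndependent.comp _ (Fin.castLE_injective _)
    exact h₁.map' (LinearMap.range f).subtype (Submodule.ker_subtype _)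
  have hwmem : ∀ i, ∃ y, f y = w i := fun i => (c (Fin.castLE hrank i)).2
  choose v hv using hwmem
  let V : (Fin r → ℝ) →ₗ[ℝ] (Fin b → ℝ) := (Pi.basisFun ℝ (Fin r)).constr ℝ v
  have hV : ∀ i, V (Pi.single i 1) = v i := by
    intro i
    have := (Pi.basisFun ℝ (Fin r)).constr_basis ℝ v i
    rwa [Pi.basisFun_apply] at this
  have happ : ∀ x : Fin r → ℝ, (f ∘ₗ V) x = ∑ i, x i • w i := by
    intro x
    have hx : x = ∑ i, x i • (Pi.single i 1 : Fin r → ℝ) := by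
      have := (Pi.basisFun ℝ (Fin r)).sum_repr x
      simpa [Pi.basisFun_repr, Pi.basisFun_apply] using this.symm
    conv_lhs => rw [hx]
    simp only [map_sum, _root_.map_smul, LinearMap.comp_apply]
    refine Finset.sum_congr rfl fun i _ => ?_
    rw [hV, hv]
  have hinj : LinearMap.ker (f ∘ₗ V) = ⊥ := by
    rw [LinearMap.ker_eq_bot']
    intro x hx
    rw [happ] at hx
    have := (Fintype.linearIndependent_iff.mp hw) x hx
    funext i; exact this i
  obtain ⟨U, hU⟩ := (f ∘ₗ V).exists_leftInverse_of_injective hinj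
  let E : (Fin r → ℝ) →ₗ[ℝ] (Fin a' → ℝ) :=
    Function.ExtendByZero.linearMap ℝ (Fin.castLE h1)
  let P : (Fin b' → ℝ) →ₗ[ℝ] (Fin r → ℝ) :=
    LinearMap.funLeft ℝ ℝ (Fin.castLE h2)
  refine ⟨LinearMap.toMatrix' (E ∘ₗ U), LinearMap.toMatrix' (V ∘ₗ P), ?_⟩
  have hM : M = LinearMap.toMatrix' f := by
    rw [hf, ← Matrix.toLin'_apply', LinearMap.toMatrix'_toLin']
  have hprod : LinearMap.toMatrix' (E ∘ₗ U) * M * LinearMap.toMatrix' (V ∘ₗ P)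
      = LinearMap.toMatrix' ((E ∘ₗ U) ∘ₗ f ∘ₗ (V ∘ₗ P)) := by
    simp only [hM, LinearMap.toMatrix'_comp]
    rw [Matrix.mul_assoc]
  rw [hprod]
  ext i j
  have hsingle : (fun j' : Fin b' => if j' = Fin.castLE h2 j then (1:ℝ) else 0)
      = Pi.single (Fin.castLE h2 j) 1 := by
    funext k; simp [Pi.single_apply, eq_comm]
  have hP : P (Pi.single (Fin.castLE h2 j) (1:ℝ)) = Pi.single j 1 := by
    funext k
    simp only [P, LinearMap.funLeft_apply]
    simp [Pi.single_apply, Fin.castLE_inj]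
  have hUfV : U ((f ∘ₗ V) (Pi.single j 1)) = Pi.single j 1 := by
    have := LinearMap.ext_iff.mp hU (Pi.single j 1)
    simpa using this
  simp only [Matrix.submatrix_apply, LinearMap.toMatrix'_apply, LinearMap.comp_apply, hsingle, hP]
  have : U (f (V (Pi.single j 1))) = Pi.single j 1 := by simpa using hUfV
  rw [this]
  show Function.extend (Fin.castLE h1) (Pi.single j 1) 0 (Fin.castLE h1 i) = _
  rw [(Fin.castLE_injective h1).extend_apply]
  simp [Pi.single_apply, Matrix.one_apply, eq_comm]

variable (a b)

/-- The generic polynomial "A" matrix. -/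
noncomputable def PA : Matrix (Fin a') (Fin a) (MvPolynomial ((Fin a' × Fin a) ⊕ (Fin b × Fin b')) ℝ) :=
  Matrix.of fun i j => MvPolynomial.X (Sum.inl (i, j))

noncomputable def PB : Matrix (Fin b) (Fin b') (MvPolynomial ((Fin a' × Fin a) ⊕ (Fin b × Fin b')) ℝ) :=
  Matrix.of fun i j => MvPolynomial.X (Sum.inr (i, j))

/-- The minor polynomial for `M`. -/
noncomputable def qpoly (M : Matrix (Fin a) (Fin b) ℝ) :
    MvPolynomial ((Fin a' × Fin a) ⊕ (Fin b × Fin b')) ℝ :=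
  ((@HMul.hMul _ _ _ Matrix.instHMulOfFintypeOfMulOfAddCommMonoid (@HMul.hMul _ _ _ Matrix.instHMulOfFintypeOfMulOfAddCommMonoid (PA a b a' b') (M.map MvPolynomial.C)) (PB a b a' b')).submatrix
    (Fin.castLE (hra a' b' M)) (Fin.castLE (hrb a' b' M))).det

noncomputable def Ax (x : (Fin a' × Fin a) ⊕ (Fin b × Fin b') → ℝ) :
    Matrix (Fin a') (Fin a) ℝ := Matrix.of fun i j => x (Sum.inl (i, j))

noncomputable def Bx (x : (Fin a' × Fin a) ⊕ (Fin b × Fin b') → ℝ) :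
    Matrix (Fin b) (Fin b') ℝ := Matrix.of fun i j => x (Sum.inr (i, j))

theorem eval_qpoly (M : Matrix (Fin a) (Fin b) ℝ)
    (x : (Fin a' × Fin a) ⊕ (Fin b × Fin b') → ℝ) :
    MvPolynomial.eval x (qpoly a b a' b' M)
      = ((Ax a b a' b' x * M * Bx a b a' b' x).submatrix
          (Fin.castLE (hra a' b' M)) (Fin.castLE (hrb a' b' M))).det := by
  have h1 : (PA a b a' b').map (MvPolynomial.eval x) = Ax a b a' b' x := by
    ext i j; simp [PA, Ax]
  have h2 : (M.map MvPolynomial.C).map (MvPolynomial.eval x) = M := by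
    ext i j; simp [Matrix.map_apply]
  have h3 : (PB a b a' b').map (MvPolynomial.eval x) = Bx a b a' b' x := by
    ext i j; simp [PB, Bx]
  rw [qpoly, (MvPolynomial.eval x).map_det, RingHom.mapMatrix_apply, ← Matrix.submatrix_map,
    Matrix.map_mul, Matrix.map_mul, h1, h2, h3]

theorem qpoly_ne_zero (M : Matrix (Fin a) (Fin b) ℝ) : qpoly a b a' b' M ≠ 0 := by
  obtain ⟨A, B, hAB⟩ := exists_AB a' b' M (hra a' b' M) (hrb a' b' M) (hrM a' b' M)
  intro h
  have := eval_qpoly a b a' b' M (Sum.elim (fun p => A p.1 p.2) (fun p => B p.1 p.2))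
  rw [h] at this
  have hA : Ax a b a' b' (Sum.elim (fun p => A p.1 p.2) (fun p => B p.1 p.2)) = A := by
    ext i j; simp [Ax]
  have hB : Bx a b a' b' (Sum.elim (fun p => A p.1 p.2) (fun p => B p.1 p.2)) = B := by
    ext i j; simp [Bx]
  rw [hA, hB, hAB] at this
  simp at this

/-- rank of a rectangular submatrix is at most the rank. -/
theorem rank_submatrix_le' {m n l o : ℕ} (X : Matrix (Fin m) (Fin n) ℝ)
    (f : Fin l → Fin m) (g : Fin o → Fin n) :
    (X.submatrix f g).rank ≤ X.rank := by
  classical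
  have h1 : ((1 : Matrix (Fin m) (Fin m) ℝ).submatrix f (Equiv.refl _)) * X
      = X.submatrix f id := by
    rw [Matrix.one_submatrix_mul]
    rfl
  have h2 : (X.submatrix f id) * ((1 : Matrix (Fin n) (Fin n) ℝ).submatrix (Equiv.refl _) g)
      = X.submatrix f g := by
    rw [Matrix.mul_submatrix_one]
    simp [Matrix.submatrix_submatrix]
  calc (X.submatrix f g).rank
      = (((1 : Matrix (Fin m) (Fin m) ℝ).submatrix f (Equiv.refl _)) * X
          * ((1 : Matrix (Fin n) (Fin n) ℝ).submatrix (Equiv.refl _) g)).rank := by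
        rw [h1, h2]
    _ ≤ (((1 : Matrix (Fin m) (Fin m) ℝ).submatrix f (Equiv.refl _)) * X).rank :=
        Matrix.rank_mul_le_left _ _
    _ ≤ X.rank := Matrix.rank_mul_le_right _ _

end Stmt6Aux

open Stmt6Aux in
theorem stmt6 (a b a' b' : ℕ) (ℳ : Finset (Matrix (Fin a) (Fin b) ℝ)) :
    ∃ L : Matrix (Fin a) (Fin b) ℝ →ₗ[ℝ] Matrix (Fin a') (Fin b') ℝ,
      ∀ M ∈ ℳ, (L M).rank = min M.rank (min a' b') := by
  classical
  -- the product polynomial is nonzero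
  have hF : (∏ M ∈ ℳ, qpoly a b a' b' M) ≠ 0 :=
    Finset.prod_ne_zero_iff.mpr fun M _ => qpoly_ne_zero a b a' b' M
  -- find a point where it does not vanish
  have hx : ∃ x, MvPolynomial.eval x (∏ M ∈ ℳ, qpoly a b a' b' M) ≠ 0 := by
    by_contra h
    push_neg at h
    exact hF (MvPolynomial.funext fun x => by simpa using h x)
  obtain ⟨x, hx⟩ := hx
  set A := Ax a b a' b' x with hA
  set B := Bx a b a' b' x with hB
  refine ⟨{ toFun := fun N => A * N * B
            map_add' := fun N₁ N₂ => by
              show A * (N₁ + N₂) * B = A * N₁ * B + A * N₂ * B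
              rw [Matrix.mul_add, Matrix.add_mul]
            map_smul' := fun c N => by
              show A * (c • N) * B = c • (A * N * B)
              rw [Matrix.mul_smul, Matrix.smul_mul] }, ?_⟩
  intro M hM
  simp only [LinearMap.coe_mk, AddHom.coe_mk]
  -- the relevant minor is nonzero
  have hdet : ((A * M * B).submatrix (Fin.castLE (hra a' b' M)) (Fin.castLE (hrb a' b' M))).det ≠ 0 := by
    rw [← eval_qpoly]
    rw [map_prod] at hx
    exact Finset.prod_ne_zero_iff.mp hx M hM
  set r := min M.rank (min a' b') with hr
  apply le_antisymm
  · refine le_min ?_ (le_min ?_ ?_)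
    · exact le_trans (Matrix.rank_mul_le_left _ _) (Matrix.rank_mul_le_right _ _)
    · exact Matrix.rank_le_height _
    · exact Matrix.rank_le_width _
  · have hS : ((A * M * B).submatrix (Fin.castLE (hra a' b' M)) (Fin.castLE (hrb a' b' M))).rank = r := by
      rw [Matrix.rank_of_isUnit _ ((Matrix.isUnit_iff_isUnit_det _).mpr
        (isUnit_iff_ne_zero.mpr hdet)), Fintype.card_fin]
    calc r = _ := hS.symm
      _ ≤ (A * M * B).rank := rank_submatrix_le' _ _ _
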